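/- Let G be an n-resource/k-player-type resource selection game with I.D.-dependent weighting. If the cost functions f_1, …, f_n and all the weighting functions f^i_j are continuous, then a strong Nash equilibrium exists in G. -/

import Mathlib

open scoped NNReal

namespace IDG

/-- A consumption profile in an `n`-resource/`k`-player-type resource selection
game with I.D.-dependent weighting: each player type `i` distributes its unit
mass among the resources in its allowed set `R i`. -/
def IsProfile (n k : ℕ) (R : Fin k → Finset (Fin n)) (s : Fin k → Fin n → ℝ≥0) : Prop :=
  (∀ i : Fin k, ∀ j : Fin n, j ∉ R i → s i j = 0) ∧
  (∀ i : Fin k, ∑ j ∈ R i, s i j = 1)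

/-- The weighted load on resource `j`, where `w i j` is the weighting function
of player type `i` on resource `j`. -/
def load (n k : ℕ) (R : Fin k → Finset (Fin n)) (w : Fin k → Fin n → ℝ≥0 → ℝ≥0)
    (s : Fin k → Fin n → ℝ≥0) (j : Fin n) : ℝ≥0 :=
  ∑ i ∈ Finset.univ.filter (fun i : Fin k => j ∈ R i), w i j (s i j)

/-- The cost of resource `j`. -/
def cost (n k : ℕ) (f : Fin n → ℝ≥0 → ℝ) (R : Fin k → Finset (Fin n))
    (w : Fin k → Fin n → ℝ≥0 → ℝ≥0) (s : Fin k → Fin n → ℝ≥0) (j : Fin n) : ℝ :=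
  f j (load n k R w s j)

/-- A Nash equilibrium. -/
def IsNash (n k : ℕ) (f : Fin n → ℝ≥0 → ℝ) (R : Fin k → Finset (Fin n))
    (w : Fin k → Fin n → ℝ≥0 → ℝ≥0) (s : Fin k → Fin n → ℝ≥0) : Prop :=
  IsProfile n k R s ∧
  ∀ i : Fin k, ∀ l : Fin n, 0 < s i l → ∀ j ∈ R i,
    cost n k f R w s l ≤ cost n k f R w s j

/-- A strong Nash equilibrium: a Nash equilibrium `s` such that there is no
consumption profile `s' ≠ s` in which every player type that strictly increases
its consumption of some resource `m` (i.e. `s' i m > s i m`) pays, at `m` in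
`s'`, strictly less than the common equilibrium cost `h^i` of its type
(expressed via: less than `cost s l` for every `l` in the support of `s i`). -/
def IsStrong (n k : ℕ) (f : Fin n → ℝ≥0 → ℝ) (R : Fin k → Finset (Fin n))
    (w : Fin k → Fin n → ℝ≥0 → ℝ≥0) (s : Fin k → Fin n → ℝ≥0) : Prop :=
  IsNash n k f R w s ∧
  ¬ ∃ s' : Fin k → Fin n → ℝ≥0, IsProfile n k R s' ∧ s' ≠ s ∧
    ∀ i : Fin k, ∀ m : Fin n, s i m < s' i m →
      ∀ l : Fin n, 0 < s i l → cost n k f R w s' m < cost n k f R w s l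

end IDG

open IDG
open Finset Filter

namespace IDGAux



section Lex
variable {n : ℕ}

/-- strict lexicographic comparison of two `Fin n`-indexed real vectors -/
def lexLT (X Y : Fin n → ℝ) : Prop :=
  ∃ r : Fin n, (∀ q : Fin n, q < r → X q = Y q) ∧ X r < Y r

lemma lexLT_of_le_upto {X Y : Fin n → ℝ} (r : Fin n)
    (hle : ∀ q : Fin n, q ≤ r → X q ≤ Y q) (hr : X r < Y r) : lexLT X Y := by
  classical
  obtain ⟨m, hmmem, hmin⟩ :=
    Finset.exists_min_image (univ.filter (fun q : Fin n => X q < Y q ∧ q ≤ r)) id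
      ⟨r, by simp [hr]⟩
  rw [mem_filter] at hmmem
  refine ⟨m, fun q hq => ?_, hmmem.2.1⟩
  have hqr : q ≤ r := le_trans hq.le hmmem.2.2
  have : ¬ (X q < Y q) := by
    intro hlt
    have := hmin q (by rw [mem_filter]; exact ⟨mem_univ _, hlt, hqr⟩)
    simp only [id] at this
    exact absurd hq (not_lt.mpr this)
  exact le_antisymm (hle q hqr) (not_lt.mp this)

/-- `Vr r c` is the `(r+1)`-st largest entry of `c`, written as a min-max formula. -/
noncomputable def Vr (r : Fin n) (c : Fin n → ℝ) : ℝ :=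
  ((univ : Finset (Fin n)).powersetCard (n - r)).attach.inf'
    (attach_nonempty_iff.mpr (powersetCard_nonempty.mpr
      (by rw [card_univ, Fintype.card_fin]; omega)))
    (fun T => T.1.sup' (card_pos.mp (by
      have hr := r.isLt
      have := (mem_powersetCard.mp T.2).2
      omega)) c)

lemma F1 {r : Fin n} {c : Fin n → ℝ} {t : ℝ} :
    t < Vr r c ↔ r.1 + 1 ≤ (univ.filter fun j => t < c j).card := by
  classical
  rw [Vr, lt_inf'_iff]
  have hr := r.isLt
  constructor
  · intro h
    by_contra hcard
    push_neg at hcard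
    have hAcard : (univ.filter fun j => t < c j).card ≤ r.1 := by omega
    have hcompl : n - r.1 ≤ (univ.filter fun j => t < c j)ᶜ.card := by
      have h1 : (univ.filter fun j => t < c j)ᶜ.card
          = n - (univ.filter fun j => t < c j).card := by
        rw [card_compl, Fintype.card_fin]
      omega
    obtain ⟨T, hTsub, hTcard⟩ := Finset.exists_subset_card_eq hcompl
    have hTmem : T ∈ (univ : Finset (Fin n)).powersetCard (n - r) :=
      mem_powersetCard.mpr ⟨subset_univ _, hTcard⟩
    obtain ⟨j, hjT, hj⟩ := (Finset.lt_sup'_iff _).mp (h ⟨T, hTmem⟩ (mem_attach _ _))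
    have := hTsub hjT
    rw [mem_compl, mem_filter] at this
    exact this ⟨mem_univ _, hj⟩
  · intro hcard T _
    rw [Finset.lt_sup'_iff]
    have hTcard := (mem_powersetCard.mp T.2).2
    have hint : (T.1 ∩ (univ.filter fun j => t < c j)).Nonempty := by
      by_contra hcon
      rw [not_nonempty_iff_eq_empty] at hcon
      have hdisj : Disjoint T.1 (univ.filter fun j => t < c j) :=
        disjoint_iff_inter_eq_empty.mpr hcon
      have hcu := card_union_of_disjoint hdisj
      have hle : (T.1 ∪ (univ.filter fun j => t < c j)).card ≤ n := by
        refine le_trans (card_le_card (subset_univ _)) ?_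
        rw [card_univ, Fintype.card_fin]
      omega
    obtain ⟨j, hj⟩ := hint
    rw [mem_inter] at hj
    exact ⟨j, hj.1, (mem_filter.mp hj.2).2⟩

lemma Vr_mono {r : Fin n} {c d : Fin n → ℝ} (h : ∀ j, c j ≤ d j) : Vr r c ≤ Vr r d := by
  refine le_of_forall_lt fun t ht => ?_
  rw [F1] at ht ⊢
  refine le_trans ht (card_le_card ?_)
  intro x hx
  rw [mem_filter] at hx ⊢
  exact ⟨hx.1, lt_of_lt_of_le hx.2 (h x)⟩

lemma lemA {c d : Fin n → ℝ} (hle : ∀ j, c j ≤ d j) {j0 : Fin n} (hstrict : c j0 < d j0) :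
    lexLT (fun r => Vr r c) (fun r => Vr r d) := by
  classical
  have hj0A : j0 ∈ univ.filter fun x => c j0 < d x := by simp [hstrict]
  have hA1 : 1 ≤ (univ.filter fun x => c j0 < d x).card := card_pos.mpr ⟨j0, hj0A⟩
  have hAn : (univ.filter fun x => c j0 < d x).card ≤ n := by
    refine le_trans (card_le_card (subset_univ _)) ?_
    rw [card_univ, Fintype.card_fin]
  set r : Fin n := ⟨(univ.filter fun x => c j0 < d x).card - 1, by omega⟩ with hrdef
  have hr1 : r.1 = (univ.filter fun x => c j0 < d x).card - 1 := rfl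
  have hrd : c j0 < Vr r d := by
    rw [F1]; omega
  have hrc : Vr r c ≤ c j0 := by
    by_contra hcon
    push_neg at hcon
    rw [F1] at hcon
    have hsub : (univ.filter fun x => c j0 < c x)
        ⊆ (univ.filter fun x => c j0 < d x).erase j0 := by
      intro x hx
      rw [mem_filter] at hx
      rw [mem_erase, mem_filter]
      refine ⟨fun hx0 => absurd (hx0 ▸ hx.2) (lt_irrefl _),
        mem_univ _, lt_of_lt_of_le hx.2 (hle x)⟩
    have h1 := card_le_card hsub
    have h2 := card_erase_of_mem hj0A
    omega
  exact lexLT_of_le_upto r (fun q _ => Vr_mono hle) (lt_of_le_of_lt hrc hrd)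

lemma lemB {c c' : Fin n → ℝ} {l j : Fin n}
    (h1 : c' l < c l) (h2 : c' j < c l) (h3 : c j < c l)
    (hoff : ∀ x, x ≠ l → x ≠ j → c' x = c x) :
    lexLT (fun r => Vr r c') (fun r => Vr r c) := by
  classical
  set u : ℝ := max (c' l) (max (c' j) (c j)) with hu
  have hul : u < c l := max_lt h1 (max_lt h2 h3)
  have hc'lu : c' l ≤ u := le_max_left _ _
  have hc'ju : c' j ≤ u := le_trans (le_max_left _ _) (le_max_right _ _)
  have hlA : l ∈ univ.filter fun x => u < c x := by simp [hul]
  have hA1 : 1 ≤ (univ.filter fun x => u < c x).card := card_pos.mpr ⟨l, hlA⟩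
  have hAn : (univ.filter fun x => u < c x).card ≤ n := by
    refine le_trans (card_le_card (subset_univ _)) ?_
    rw [card_univ, Fintype.card_fin]
  set r : Fin n := ⟨(univ.filter fun x => u < c x).card - 1, by omega⟩ with hrdef
  have hr1 : r.1 = (univ.filter fun x => u < c x).card - 1 := rfl
  have hrc : u < Vr r c := by rw [F1]; omega
  have hrc' : Vr r c' ≤ u := by
    by_contra hcon
    push_neg at hcon
    rw [F1] at hcon
    have hsub : (univ.filter fun x => u < c' x)
        ⊆ (univ.filter fun x => u < c x).erase l := by
      intro x hx
      rw [mem_filter] at hx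
      have hxl : x ≠ l := by rintro rfl; exact absurd hx.2 (not_lt.mpr hc'lu)
      have hxj : x ≠ j := by rintro rfl; exact absurd hx.2 (not_lt.mpr hc'ju)
      rw [mem_erase, mem_filter]
      exact ⟨hxl, mem_univ _, (hoff x hxl hxj) ▸ hx.2⟩
    have hh1 := card_le_card hsub
    have hh2 := card_erase_of_mem hlA
    omega
  have hle : ∀ q : Fin n, q ≤ r → Vr q c' ≤ Vr q c := by
    intro q hq
    have hqr : q.1 ≤ r.1 := hq
    refine le_of_forall_lt fun t ht => ?_
    rw [F1] at ht ⊢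
    rcases le_or_gt u t with hut | htu
    · refine le_trans ht (card_le_card ?_)
      intro x hx
      rw [mem_filter] at hx ⊢
      have hxl : x ≠ l := by
        rintro rfl; exact absurd hx.2 (not_lt.mpr (le_trans hc'lu hut))
      have hxj : x ≠ j := by
        rintro rfl; exact absurd hx.2 (not_lt.mpr (le_trans hc'ju hut))
      exact ⟨hx.1, (hoff x hxl hxj) ▸ hx.2⟩
    · have hsub : (univ.filter fun x => u < c x) ⊆ univ.filter fun x => t < c x := by
        intro x hx
        rw [mem_filter] at hx ⊢
        exact ⟨hx.1, lt_trans htu hx.2⟩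
      have := card_le_card hsub
      omega
  exact lexLT_of_le_upto r hle (lt_of_le_of_lt hrc' hrc)

end Lex

-- continuity of Vr
lemma Vr_continuous {n : ℕ} (r : Fin n) : Continuous fun c : Fin n → ℝ => Vr r c := by
  rw [continuous_iff_continuousAt]
  intro c0
  apply Filter.Tendsto.finset_inf'_nhds_apply
  intro T _
  apply Filter.Tendsto.finset_sup'_nhds_apply
  intro j _
  exact ((continuous_apply j).tendsto c0)

section LM
-- iterated argmin
lemma exists_lexmin {n : ℕ} {X : Type*} [TopologicalSpace X] {P : Set X}
    (hP : IsCompact P) (hne : P.Nonempty)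
    (G : X → Fin n → ℝ) (hG : ∀ r, Continuous fun x => G x r) :
    ∃ s0 ∈ P, ∀ u ∈ P, ¬ lexLT (G u) (G s0) := by
  classical
  let K : ℕ → Set X := fun q => Nat.rec P
    (fun q Kq => if h : q < n then
        Kq ∩ {x | ∀ y ∈ Kq, G x ⟨q, h⟩ ≤ G y ⟨q, h⟩} else Kq) q
  have hK0 : K 0 = P := rfl
  have hKstep : ∀ q (h : q < n),
      K (q + 1) = K q ∩ {x | ∀ y ∈ K q, G x ⟨q, h⟩ ≤ G y ⟨q, h⟩} := by
    intro q h
    simp only [K, dif_pos h]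
  have hKstep' : ∀ q, ¬ (q < n) → K (q + 1) = K q := by
    intro q h; simp only [K, dif_neg h]
  have hmain : ∀ q, IsCompact (K q) ∧ (K q).Nonempty ∧ K q ⊆ P := by
    intro q
    induction q with
    | zero => exact ⟨hP, hne, subset_rfl⟩
    | succ q ih =>
      by_cases h : q < n
      · rw [hKstep q h]
        obtain ⟨ihc, ihne, ihsub⟩ := ih
        have hclosed : IsClosed {x | ∀ y ∈ K q, G x ⟨q, h⟩ ≤ G y ⟨q, h⟩} := by
          have hrw : {x | ∀ y ∈ K q, G x ⟨q, h⟩ ≤ G y ⟨q, h⟩}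
              = ⋂ y ∈ K q, {x | G x ⟨q, h⟩ ≤ G y ⟨q, h⟩} := by
            ext z; simp
          rw [hrw]
          exact isClosed_biInter fun y _ => isClosed_le (hG _) continuous_const
        obtain ⟨x, hx, hxmin⟩ := ihc.exists_isMinOn ihne ((hG ⟨q, h⟩).continuousOn)
        refine ⟨ihc.inter_right hclosed, ⟨x, hx, fun y hy => hxmin hy⟩,
          fun z hz => ihsub hz.1⟩
      · rw [hKstep' q h]; exact ih
  have hanti : ∀ a b : ℕ, a ≤ b → K b ⊆ K a := by
    intro a b hab
    induction b with
    | zero => rw [Nat.le_zero.mp hab]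
    | succ b ih =>
      rcases Nat.lt_or_ge a (b+1) with hlt | hge
      · have hab' : a ≤ b := by omega
        refine subset_trans ?_ (ih hab')
        by_cases h : b < n
        · rw [hKstep b h]; exact Set.inter_subset_left
        · rw [hKstep' b h]
      · have : a = b + 1 := by omega
        rw [this]
  obtain ⟨hcn, ⟨s0, hs0⟩, hsubn⟩ := hmain n
  refine ⟨s0, hsubn hs0, ?_⟩
  rintro u hu ⟨r, heq, hlt⟩
  have hmem : ∀ q : ℕ, q ≤ r.1 → u ∈ K q := by
    intro q
    induction q with
    | zero => intro _; exact hu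
    | succ q ih =>
      intro hq1
      have hql : q < n := by have := r.isLt; omega
      rw [hKstep q hql]
      refine ⟨ih (by omega), fun y hy => ?_⟩
      have heq' : G u ⟨q, hql⟩ = G s0 ⟨q, hql⟩ := by
        apply heq
        exact (by omega : q < r.1)
      rw [heq']
      have hs0' : s0 ∈ K (q + 1) := hanti (q+1) n (by have := r.isLt; omega) hs0
      rw [hKstep q hql] at hs0'
      exact hs0'.2 y hy
  have hur : u ∈ K r.1 := hmem r.1 le_rfl
  have hs0r : s0 ∈ K (r.1 + 1) := hanti (r.1+1) n (by have := r.isLt; omega) hs0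
  rw [hKstep r.1 r.isLt] at hs0r
  have := hs0r.2 u hur
  rw [show (⟨r.1, r.isLt⟩ : Fin n) = r from Fin.eta r r.isLt] at this
  exact absurd hlt (not_lt.mpr this)
end LM

section Game
variable {n k : ℕ}

noncomputable def wT (w : Fin k → Fin n → ℝ≥0 → ℝ≥0) (i : Fin k) (j : Fin n) (x : ℝ≥0) : ℝ≥0 :=
  w i j (min x 1)

noncomputable def loadT (R : Fin k → Finset (Fin n)) (w : Fin k → Fin n → ℝ≥0 → ℝ≥0)
    (s : Fin k → Fin n → ℝ≥0) (j : Fin n) : ℝ≥0 :=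
  ∑ i ∈ Finset.univ.filter (fun i : Fin k => j ∈ R i), wT w i j (s i j)

noncomputable def costE (f : Fin n → ℝ≥0 → ℝ) (R : Fin k → Finset (Fin n))
    (w : Fin k → Fin n → ℝ≥0 → ℝ≥0) (ε : ℝ) (s : Fin k → Fin n → ℝ≥0) (j : Fin n) : ℝ :=
  f j (loadT R w s j) + ε * (loadT R w s j : ℝ)

variable {R : Fin k → Finset (Fin n)} {w : Fin k → Fin n → ℝ≥0 → ℝ≥0}
  {f : Fin n → ℝ≥0 → ℝ}

lemma profile_le_one {s : Fin k → Fin n → ℝ≥0} (hs : IsProfile n k R s) (i : Fin k) (j : Fin n) :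
    s i j ≤ 1 := by
  by_cases hj : j ∈ R i
  · calc s i j ≤ ∑ j' ∈ R i, s i j' := Finset.single_le_sum (fun _ _ => zero_le) hj
    _ = 1 := hs.2 i
  · rw [hs.1 i j hj]; exact zero_le

lemma loadT_eq_load {s : Fin k → Fin n → ℝ≥0} (hs : IsProfile n k R s) (j : Fin n) :
    loadT R w s j = load n k R w s j := by
  refine Finset.sum_congr rfl fun i _ => ?_
  rw [wT, min_eq_left (profile_le_one hs i j)]

lemma wT_continuous (hwc : ∀ i : Fin k, ∀ j ∈ R i, ContinuousOn (w i j) (Set.Iic 1))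
    (i : Fin k) (j : Fin n) (hj : j ∈ R i) : Continuous (wT w i j) := by
  refine (hwc i j hj).comp_continuous (continuous_id.min continuous_const) fun x => ?_
  simp [Set.mem_Iic]

lemma loadT_continuous (hwc : ∀ i : Fin k, ∀ j ∈ R i, ContinuousOn (w i j) (Set.Iic 1))
    (j : Fin n) : Continuous (fun s : Fin k → Fin n → ℝ≥0 => loadT R w s j) := by
  refine continuous_finset_sum _ fun i hi => ?_
  exact (wT_continuous hwc i j (Finset.mem_filter.mp hi).2).comp
    ((continuous_apply j).comp (continuous_apply i))

lemma costE_continuous (hcont : ∀ j, Continuous (f j))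
    (hwc : ∀ i : Fin k, ∀ j ∈ R i, ContinuousOn (w i j) (Set.Iic 1)) (ε : ℝ) (j : Fin n) :
    Continuous (fun s : Fin k → Fin n → ℝ≥0 => costE f R w ε s j) :=
  ((hcont j).comp (loadT_continuous hwc j)).add
    (continuous_const.mul (NNReal.continuous_coe.comp (loadT_continuous hwc j)))

lemma wT_mono (hw : ∀ i : Fin k, ∀ j ∈ R i, StrictMonoOn (w i j) (Set.Iic 1))
    (i : Fin k) (j : Fin n) (hj : j ∈ R i) : Monotone (wT w i j) := by
  intro x y hxy
  rcases lt_or_eq_of_le (min_le_min hxy (le_refl (1:ℝ≥0))) with h | h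
  · exact le_of_lt (hw i j hj (Set.mem_Iic.mpr (min_le_right _ _))
      (Set.mem_Iic.mpr (min_le_right _ _)) h)
  · rw [wT, wT, h]

lemma wT_strict (hw : ∀ i : Fin k, ∀ j ∈ R i, StrictMonoOn (w i j) (Set.Iic 1))
    (i : Fin k) (j : Fin n) (hj : j ∈ R i) {x y : ℝ≥0} (hy : y ≤ 1) (hxy : x < y) :
    wT w i j x < wT w i j y := by
  have hx : x ≤ 1 := le_trans hxy.le hy
  rw [wT, wT, min_eq_left hx, min_eq_left hy]
  exact hw i j hj (Set.mem_Iic.mpr hx) (Set.mem_Iic.mpr hy) hxy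

lemma Pset_closed : IsClosed {s : Fin k → Fin n → ℝ≥0 | IsProfile n k R s} := by
  have hrw : {s : Fin k → Fin n → ℝ≥0 | IsProfile n k R s}
      = (⋂ i : Fin k, ⋂ j : Fin n, {s : Fin k → Fin n → ℝ≥0 | j ∉ R i → s i j = 0}) ∩
        ⋂ i : Fin k, {s : Fin k → Fin n → ℝ≥0 | ∑ j ∈ R i, s i j = 1} := by
    ext s; simp [IsProfile, Set.mem_iInter]
  rw [hrw]
  refine IsClosed.inter (isClosed_iInter fun i => isClosed_iInter fun j => ?_)
    (isClosed_iInter fun i => ?_)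
  · by_cases hj : j ∈ R i
    · have hset : {s : Fin k → Fin n → ℝ≥0 | j ∉ R i → s i j = 0} = Set.univ := by
        ext s; simp [hj]
      rw [hset]; exact isClosed_univ
    · have hset : {s : Fin k → Fin n → ℝ≥0 | j ∉ R i → s i j = 0}
          = {s : Fin k → Fin n → ℝ≥0 | s i j = 0} := by
        ext s; simp [hj]
      rw [hset]
      exact isClosed_eq ((continuous_apply j).comp (continuous_apply i)) continuous_const
  · exact isClosed_eq (continuous_finset_sum _ fun j _ =>
      (continuous_apply j).comp (continuous_apply i)) continuous_const


lemma Pset_compact : IsCompact {s : Fin k → Fin n → ℝ≥0 | IsProfile n k R s} := by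
  have hbig : IsCompact (Set.univ.pi fun _ : Fin k =>
      (Set.univ.pi fun _ : Fin n => Set.Icc (0:ℝ≥0) 1)) :=
    isCompact_univ_pi fun _ => isCompact_univ_pi fun _ => isCompact_Icc
  refine IsCompact.of_isClosed_subset hbig Pset_closed fun s hs => ?_
  refine Set.mem_univ_pi.mpr fun i => Set.mem_univ_pi.mpr fun j => ?_
  exact Set.mem_Icc.mpr ⟨zero_le, profile_le_one hs i j⟩

lemma Pset_nonempty (hR : ∀ i, (R i).Nonempty) :
    ∃ s : Fin k → Fin n → ℝ≥0, IsProfile n k R s := by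
  classical
  refine ⟨fun i j => if j = (hR i).choose then 1 else 0, fun i j hj => ?_, fun i => ?_⟩
  · have : j ≠ (hR i).choose := fun h => hj (h ▸ (hR i).choose_spec)
    simp [this]
  · rw [Finset.sum_ite_eq' (R i) ((hR i).choose) (fun _ => (1:ℝ≥0))]
    simp [(hR i).choose_spec]

lemma strict_exists (hn : 0 < n)
    (hR : ∀ i, (R i).Nonempty)
    (hmono : ∀ j, Monotone (f j)) (hcont : ∀ j, Continuous (f j))
    (hw : ∀ i : Fin k, ∀ j ∈ R i, StrictMonoOn (w i j) (Set.Iic 1))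
    (hwc : ∀ i : Fin k, ∀ j ∈ R i, ContinuousOn (w i j) (Set.Iic 1))
    (ε : ℝ) (hε : 0 < ε) :
    ∃ s : Fin k → Fin n → ℝ≥0, IsProfile n k R s ∧
      (∀ i : Fin k, ∀ l : Fin n, 0 < s i l → ∀ j ∈ R i,
        costE f R w ε s l ≤ costE f R w ε s j) ∧
      (∀ u : Fin k → Fin n → ℝ≥0, IsProfile n k R u →
        (∀ j, loadT R w u j ≤ loadT R w s j) → ∀ j, loadT R w u j = loadT R w s j) := by
  classical
  obtain ⟨s0, hs0P, hmin⟩ := exists_lexmin (n := n) Pset_compact (Pset_nonempty hR)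
    (fun x r => Vr r (fun j => costE f R w ε x j))
    (fun r => (Vr_continuous r).comp (continuous_pi fun j => costE_continuous hcont hwc ε j))
  have hcostle : ∀ {u v : Fin k → Fin n → ℝ≥0} {j : Fin n},
      loadT R w u j ≤ loadT R w v j → costE f R w ε u j ≤ costE f R w ε v j := by
    intro u v j h
    exact add_le_add (hmono j h) (mul_le_mul_of_nonneg_left (NNReal.coe_le_coe.mpr h) hε.le)
  have hcostlt : ∀ {u v : Fin k → Fin n → ℝ≥0} {j : Fin n},
      loadT R w u j < loadT R w v j → costE f R w ε u j < costE f R w ε v j := by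
    intro u v j h
    exact add_lt_add_of_le_of_lt (hmono j h.le)
      (mul_lt_mul_of_pos_left (NNReal.coe_lt_coe.mpr h) hε)
  refine ⟨s0, hs0P, ?_, ?_⟩
  · -- Nash property of the lex-min profile
    by_contra hcon
    push_neg at hcon
    obtain ⟨i, l, hl, j, hjR, hjlt⟩ := hcon
    have hlR : l ∈ R i := by
      by_contra h; exact absurd (hs0P.1 i l h) (ne_of_gt hl)
    have hjl : j ≠ l := fun h => absurd hjlt (by rw [h]; exact lt_irrefl _)
    -- the deviating profiles
    set θ : ℕ → ℝ≥0 := fun q => s0 i l / ((q+1 : ℕ) : ℝ≥0) with hθdef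
    have hθpos : ∀ q, 0 < θ q := by
      intro q
      refine div_pos hl ?_
      exact_mod_cast Nat.succ_pos q
    have hθle : ∀ q, θ q ≤ s0 i l := by
      intro q
      refine div_le_self (zero_le) ?_
      exact_mod_cast Nat.succ_le_succ (Nat.zero_le q)
    have hθ0 : Tendsto θ atTop (nhds 0) := by
      have h1 := tendsto_const_div_atTop_nhds_zero_nat (s0 i l)
      exact h1.comp (tendsto_add_atTop_nat 1)
    set dev : ℕ → (Fin k → Fin n → ℝ≥0) := fun q i' j' =>
      if i' = i ∧ j' = l then s0 i l - θ q
      else if i' = i ∧ j' = j then s0 i j + θ q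
      else s0 i' j' with hdevdef
    have hdev_il : ∀ q, dev q i l = s0 i l - θ q := by intro q; simp [hdevdef]
    have hdev_ij : ∀ q, dev q i j = s0 i j + θ q := by intro q; simp [hdevdef, hjl]
    have hdev_other : ∀ q i' j', (i' ≠ i ∨ (j' ≠ l ∧ j' ≠ j)) → dev q i' j' = s0 i' j' := by
      intro q i' j' h
      rcases h with h | ⟨h1, h2⟩
      · simp [hdevdef, h]
      · simp [hdevdef, h1, h2]
    have hdevP : ∀ q, IsProfile n k R (dev q) := by
      intro q
      constructor
      · intro i' j' hj'
        by_cases hi' : i' = i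
        · subst hi'
          have hj'l : j' ≠ l := fun h => hj' (h ▸ hlR)
          have hj'j : j' ≠ j := fun h => hj' (h ▸ hjR)
          rw [hdev_other q i' j' (Or.inr ⟨hj'l, hj'j⟩)]
          exact hs0P.1 i' j' hj'
        · rw [hdev_other q i' j' (Or.inl hi')]
          exact hs0P.1 i' j' hj'
      · intro i'
        by_cases hi' : i' = i
        · subst hi'
          have hjmem : j ∈ (R i').erase l := Finset.mem_erase.mpr ⟨hjl, hjR⟩
          have hsum0 := hs0P.2 i'
          rw [← Finset.add_sum_erase _ _ hlR, ← Finset.add_sum_erase _ _ hjmem] at hsum0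
          rw [← Finset.add_sum_erase _ _ hlR, ← Finset.add_sum_erase _ _ hjmem]
          have hEsum : ∑ j' ∈ ((R i').erase l).erase j, dev q i' j'
              = ∑ j' ∈ ((R i').erase l).erase j, s0 i' j' := by
            refine Finset.sum_congr rfl fun j' hj' => ?_
            have h1 := (Finset.mem_erase.mp hj').1
            have h2 := (Finset.mem_erase.mp (Finset.mem_erase.mp hj').2).1
            exact hdev_other q i' j' (Or.inr ⟨h2, h1⟩)
          rw [hdev_il, hdev_ij, hEsum]
          calc (s0 i' l - θ q) + ((s0 i' j + θ q) + ∑ j' ∈ ((R i').erase l).erase j, s0 i' j')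
              = ((s0 i' l - θ q) + θ q) + (s0 i' j + ∑ j' ∈ ((R i').erase l).erase j, s0 i' j') := by
                ring
            _ = s0 i' l + (s0 i' j + ∑ j' ∈ ((R i').erase l).erase j, s0 i' j') := by
                rw [tsub_add_cancel_of_le (hθle q)]
            _ = 1 := hsum0
        · rw [← hs0P.2 i']
          refine Finset.sum_congr rfl fun j' _ => ?_
          exact hdev_other q i' j' (Or.inl hi')
    have hload_off : ∀ q (j' : Fin n), j' ≠ l → j' ≠ j →
        loadT R w (dev q) j' = loadT R w s0 j' := by
      intro q j' h1 h2
      refine Finset.sum_congr rfl fun i' _ => ?_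
      rw [hdev_other q i' j' (Or.inr ⟨h1, h2⟩)]
    have hload_l : ∀ q, loadT R w (dev q) l < loadT R w s0 l := by
      intro q
      refine Finset.sum_lt_sum (fun i' hi' => ?_)
        ⟨i, Finset.mem_filter.mpr ⟨Finset.mem_univ _, hlR⟩, ?_⟩
      · have hi'R : l ∈ R i' := (Finset.mem_filter.mp hi').2
        by_cases h : i' = i
        · subst h; rw [hdev_il]
          exact wT_mono hw i' l hi'R tsub_le_self
        · rw [hdev_other q i' l (Or.inl h)]
      · rw [hdev_il]
        exact wT_strict hw i l hlR (profile_le_one hs0P i l) (tsub_lt_self hl (hθpos q))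
    have hcost_l : ∀ q, costE f R w ε (dev q) l < costE f R w ε s0 l :=
      fun q => hcostlt (hload_l q)
    have hload_j_t : Tendsto (fun q => loadT R w (dev q) j) atTop (nhds (loadT R w s0 j)) := by
      refine tendsto_finset_sum _ fun i' hi' => ?_
      by_cases h : i' = i
      · subst h
        have ht : Tendsto (fun q => s0 i' j + θ q) atTop (nhds (s0 i' j)) := by
          have h2 := Filter.Tendsto.const_add (s0 i' j) hθ0
          rw [add_zero] at h2
          exact h2
        have hcw : Continuous (wT w i' j) :=
          wT_continuous hwc i' j (Finset.mem_filter.mp hi').2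
        have h3 := (hcw.continuousAt.tendsto).comp ht
        have h4 : ∀ q, wT w i' j (dev q i' j) = wT w i' j (s0 i' j + θ q) := fun q => by
          rw [hdev_ij]
        simp only [Function.comp_def] at h3
        simpa only [h4] using h3
      · have h4 : ∀ q, wT w i' j (dev q i' j) = wT w i' j (s0 i' j) := fun q => by
          rw [hdev_other q i' j (Or.inl h)]
        simp only [h4]
        exact tendsto_const_nhds
    have hcost_j_t : Tendsto (fun q => costE f R w ε (dev q) j) atTop
        (nhds (costE f R w ε s0 j)) := by
      refine Filter.Tendsto.add (((hcont j).continuousAt.tendsto).comp hload_j_t) ?_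
      exact Filter.Tendsto.const_mul ε
        ((NNReal.continuous_coe.continuousAt.tendsto).comp hload_j_t)
    obtain ⟨q0, hq0⟩ := (Filter.Tendsto.eventually_lt_const hjlt hcost_j_t).exists
    refine hmin (dev q0) (hdevP q0) ?_
    exact lemB (hcost_l q0) hq0 hjlt
      (fun x hxl hxj => by rw [costE, costE, hload_off q0 x hxl hxj])
  · -- Pareto minimality of loads
    intro u huP hle j
    by_contra hne2
    have hlt : loadT R w u j < loadT R w s0 j := lt_of_le_of_ne (hle j) hne2
    refine hmin u huP ?_
    exact lemA (fun j' => hcostle (hle j')) (hcostlt hlt)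


theorem main_exists_strong (hn : 0 < n)
    (hR : ∀ i, (R i).Nonempty)
    (hmono : ∀ j, Monotone (f j)) (hcont : ∀ j, Continuous (f j))
    (hw : ∀ i : Fin k, ∀ j ∈ R i, StrictMonoOn (w i j) (Set.Iic 1))
    (hwc : ∀ i : Fin k, ∀ j ∈ R i, ContinuousOn (w i j) (Set.Iic 1)) :
    ∃ s : Fin k → Fin n → ℝ≥0,
      (IsProfile n k R s ∧
        ∀ i : Fin k, ∀ l : Fin n, 0 < s i l → ∀ j ∈ R i,
          cost n k f R w s l ≤ cost n k f R w s j) ∧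
      ¬ ∃ s' : Fin k → Fin n → ℝ≥0, IsProfile n k R s' ∧ s' ≠ s ∧
        ∀ i : Fin k, ∀ m : Fin n, s i m < s' i m →
          ∀ l : Fin n, 0 < s i l → cost n k f R w s' m < cost n k f R w s l := by
  classical
  set εs : ℕ → ℝ := fun m => ((m+1 : ℕ) : ℝ)⁻¹ with hεsdef
  have hεpos : ∀ m, 0 < εs m := by
    intro m
    rw [hεsdef]
    positivity
  have H : ∀ m : ℕ, ∃ s : Fin k → Fin n → ℝ≥0, IsProfile n k R s ∧
      (∀ i : Fin k, ∀ l : Fin n, 0 < s i l → ∀ j ∈ R i,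
        costE f R w (εs m) s l ≤ costE f R w (εs m) s j) ∧
      (∀ u : Fin k → Fin n → ℝ≥0, IsProfile n k R u →
        (∀ j, loadT R w u j ≤ loadT R w s j) → ∀ j, loadT R w u j = loadT R w s j) :=
    fun m => strict_exists hn hR hmono hcont hw hwc (εs m) (hεpos m)
  set sm : ℕ → (Fin k → Fin n → ℝ≥0) := fun m => (H m).choose with hsmdef
  have hsmP : ∀ m, IsProfile n k R (sm m) := fun m => (H m).choose_spec.1
  have hsmN : ∀ m, ∀ i : Fin k, ∀ l : Fin n, 0 < sm m i l → ∀ j ∈ R i,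
      costE f R w (εs m) (sm m) l ≤ costE f R w (εs m) (sm m) j :=
    fun m => (H m).choose_spec.2.1
  have hsmM : ∀ m, ∀ u : Fin k → Fin n → ℝ≥0, IsProfile n k R u →
      (∀ j, loadT R w u j ≤ loadT R w (sm m) j) →
      ∀ j, loadT R w u j = loadT R w (sm m) j :=
    fun m => (H m).choose_spec.2.2
  obtain ⟨sstar, hsstarP, φ, hφmono, hconv⟩ :=
    Pset_compact.tendsto_subseq (x := sm) (fun m => hsmP m)
  have hsstarP' : IsProfile n k R sstar := hsstarP
  have hcoord : ∀ i j, Tendsto (fun m => sm (φ m) i j) atTop (nhds (sstar i j)) := by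
    intro i j
    have h1 := (((continuous_apply j).comp (continuous_apply i)).continuousAt.tendsto).comp hconv
    exact h1
  have hload : ∀ j, Tendsto (fun m => loadT R w (sm (φ m)) j) atTop
      (nhds (loadT R w sstar j)) := by
    intro j
    exact (((loadT_continuous hwc j).continuousAt).tendsto).comp hconv
  have hφ : Tendsto φ atTop atTop := hφmono.tendsto_atTop
  have hε0 : Tendsto (fun m => εs (φ m)) atTop (nhds 0) := by
    have hbase : Tendsto εs atTop (nhds 0) := by
      have h1 : Tendsto (fun m : ℕ => ((m : ℝ))⁻¹) atTop (nhds 0) :=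
        tendsto_inv_atTop_zero.comp tendsto_natCast_atTop_atTop
      exact h1.comp (tendsto_add_atTop_nat 1)
    exact hbase.comp hφ
  -- limit costs
  have hcostlim : ∀ j, Tendsto (fun m => costE f R w (εs (φ m)) (sm (φ m)) j) atTop
      (nhds (f j (loadT R w sstar j))) := by
    intro j
    have h1 : Tendsto (fun m => f j (loadT R w (sm (φ m)) j)) atTop
        (nhds (f j (loadT R w sstar j))) := ((hcont j).continuousAt.tendsto).comp (hload j)
    have h3 : Tendsto (fun m => (loadT R w (sm (φ m)) j : ℝ)) atTop
        (nhds ((loadT R w sstar j : ℝ))) :=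
      (NNReal.continuous_coe.continuousAt.tendsto).comp (hload j)
    have h2 := hε0.mul h3
    rw [zero_mul] at h2
    have h4 := h1.add h2
    rw [add_zero] at h4
    exact h4
  -- Nash property of the limit
  have hNash : ∀ i : Fin k, ∀ l : Fin n, 0 < sstar i l → ∀ j ∈ R i,
      f l (loadT R w sstar l) ≤ f j (loadT R w sstar j) := by
    intro i l hl j hj
    have hev : ∀ᶠ m in atTop, 0 < sm (φ m) i l :=
      (hcoord i l).eventually (eventually_gt_nhds hl)
    have hineq : ∀ᶠ m in atTop, costE f R w (εs (φ m)) (sm (φ m)) l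
        ≤ costE f R w (εs (φ m)) (sm (φ m)) j :=
      hev.mono fun m hm => hsmN (φ m) i l hm j hj
    exact le_of_tendsto_of_tendsto (hcostlim l) (hcostlim j) hineq
  have hNashC : ∀ i : Fin k, ∀ l : Fin n, 0 < sstar i l → ∀ j ∈ R i,
      cost n k f R w sstar l ≤ cost n k f R w sstar j := by
    intro i l hl j hj
    rw [cost, cost, ← loadT_eq_load hsstarP', ← loadT_eq_load hsstarP']
    exact hNash i l hl j hj
  refine ⟨sstar, ⟨hsstarP', hNashC⟩, ?_⟩
  rintro ⟨s', hs'P, hs'ne, hblk⟩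
  -- each deviator strictly increases somewhere
  have hInc : ∀ i, s' i ≠ sstar i → ∃ j, sstar i j < s' i j := by
    intro i hi
    by_contra hno
    push_neg at hno
    apply hi
    funext j
    by_cases hj : j ∈ R i
    · have hsums : ∑ j' ∈ R i, s' i j' = ∑ j' ∈ R i, sstar i j' := by
        rw [hs'P.2 i, hsstarP'.2 i]
      exact (Finset.sum_eq_sum_iff_of_le (fun j' _ => hno j')).mp hsums j hj
    · rw [hs'P.1 i j hj, hsstarP'.1 i j hj]
  -- strict load decrease at each increased resource
  have hkey : ∀ i j, sstar i j < s' i j → loadT R w s' j < loadT R w sstar j := by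
    intro i j hij
    have hjR : j ∈ R i := by
      by_contra h
      rw [hs'P.1 i j h] at hij
      exact absurd hij (not_lt.mpr (zero_le))
    obtain ⟨l0, hl0R, hl0⟩ : ∃ l0 ∈ R i, sstar i l0 ≠ 0 := by
      apply Finset.exists_ne_zero_of_sum_ne_zero
      rw [hsstarP'.2 i]; exact one_ne_zero
    have hl0pos : 0 < sstar i l0 := zero_lt_iff.mpr hl0
    have hblk' := hblk i j hij l0 hl0pos
    have h2 := hNashC i l0 hl0pos j hjR
    have h3 : cost n k f R w s' j < cost n k f R w sstar j := lt_of_lt_of_le hblk' h2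
    rw [cost, cost, ← loadT_eq_load hs'P, ← loadT_eq_load hsstarP'] at h3
    by_contra hge
    push_neg at hge
    exact absurd h3 (not_lt.mpr (hmono j hge))
  obtain ⟨i0, hi0⟩ : ∃ i, s' i ≠ sstar i := Function.ne_iff.mp hs'ne
  set wit : Fin k → Fin n := fun i =>
    if h : ∃ j, sstar i j < s' i j then h.choose else ⟨0, hn⟩ with hwitdef
  have hwit : ∀ i, s' i ≠ sstar i → sstar i (wit i) < s' i (wit i) := by
    intro i hi
    have hex := hInc i hi
    rw [hwitdef]
    simp only [dif_pos hex]
    exact hex.choose_spec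
  have hwitR : ∀ i, s' i ≠ sstar i → wit i ∈ R i := by
    intro i hi
    by_contra h
    have := hwit i hi
    rw [hs'P.1 i (wit i) h] at this
    exact absurd this (not_lt.mpr (zero_le))
  -- the hybrid profiles
  set base : ℕ → Fin k → Fin n → ℝ≥0 := fun m i j =>
    if sstar i j < s' i j then s' i j else min (sm (φ m) i j) (s' i j) with hbasedef
  have hbase_le : ∀ m i j, base m i j ≤ s' i j := by
    intro m i j
    rw [hbasedef]
    by_cases h : sstar i j < s' i j
    · simp [h]
    · simp only [h, if_false]
      exact min_le_right _ _
  have hbase_sum : ∀ m i, ∑ j ∈ R i, base m i j ≤ 1 := by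
    intro m i
    calc ∑ j ∈ R i, base m i j ≤ ∑ j ∈ R i, s' i j :=
          Finset.sum_le_sum fun j _ => hbase_le m i j
      _ = 1 := hs'P.2 i
  set dd : ℕ → Fin k → ℝ≥0 := fun m i => 1 - ∑ j ∈ R i, base m i j with hdddef
  set uu : ℕ → Fin k → Fin n → ℝ≥0 := fun m i j =>
    if s' i = sstar i then sm (φ m) i j
    else base m i j + (if j = wit i then dd m i else 0) with huudef
  have huuP : ∀ m, IsProfile n k R (uu m) := by
    intro m
    constructor
    · intro i j hj
      rw [huudef]
      by_cases hD : s' i = sstar i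
      · simp only [hD, if_true]
        exact (hsmP (φ m)).1 i j hj
      · simp only [hD, if_false]
        have hjwit : j ≠ wit i := by
          intro hjw
          exact hj (hjw ▸ hwitR i hD)
        have hb : base m i j = 0 := by
          rw [hbasedef]
          have hz' : s' i j = 0 := hs'P.1 i j hj
          have hz : ¬ sstar i j < s' i j := by
            rw [hz']; exact not_lt.mpr (zero_le)
          simp [hz, hz']
        simp [hjwit, hb]
    · intro i
      rw [huudef]
      by_cases hD : s' i = sstar i
      · simp only [hD, if_true]
        exact (hsmP (φ m)).2 i
      · simp only [hD, if_false]
        rw [Finset.sum_add_distrib]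
        rw [Finset.sum_ite_eq' (R i) (wit i) (fun _ => dd m i)]
        simp only [hwitR i hD, if_true]
        rw [hdddef]
        exact add_tsub_cancel_of_le (hbase_sum m i)
  have hle_non : ∀ m j, (¬ ∃ i, sstar i j < s' i j) →
      loadT R w (uu m) j ≤ loadT R w (sm (φ m)) j := by
    intro m j hnoinc
    push_neg at hnoinc
    refine Finset.sum_le_sum fun i hi => ?_
    have hiR : j ∈ R i := (Finset.mem_filter.mp hi).2
    refine wT_mono hw i j hiR ?_
    rw [huudef]
    by_cases hD : s' i = sstar i
    · simp only [hD, if_true]; exact le_rfl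
    · simp only [hD, if_false]
      have hjwit : j ≠ wit i := by
        intro hjw
        exact absurd (hjw ▸ hwit i hD) (not_lt.mpr (hnoinc i))
      have hnl : ¬ sstar i j < s' i j := not_lt.mpr (hnoinc i)
      simp only [hjwit, if_false, add_zero, hbasedef, hnl]
      exact min_le_left _ _
  have hbase_t : ∀ i j, Tendsto (fun m => base m i j) atTop (nhds (s' i j)) := by
    intro i j
    rw [hbasedef]
    by_cases h : sstar i j < s' i j
    · simp only [h, if_true]
      exact tendsto_const_nhds
    · simp only [h, if_false]
      have hmin : min (sstar i j) (s' i j) = s' i j := min_eq_right (not_lt.mp h)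
      have := Filter.Tendsto.min (hcoord i j) (tendsto_const_nhds (x := s' i j))
      rw [hmin] at this
      exact this
  have hdd_t : ∀ i, s' i ≠ sstar i → Tendsto (fun m => dd m i) atTop (nhds 0) := by
    intro i _
    rw [hdddef]
    have hsum_t : Tendsto (fun m => ∑ j ∈ R i, base m i j) atTop (nhds 1) := by
      have h1 : Tendsto (fun m => ∑ j ∈ R i, base m i j) atTop
          (nhds (∑ j ∈ R i, s' i j)) :=
        tendsto_finset_sum _ fun j _ => hbase_t i j
      rw [hs'P.2 i] at h1
      exact h1
    have := Filter.Tendsto.sub (tendsto_const_nhds (x := (1:ℝ≥0))) hsum_t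
    rw [tsub_self] at this
    exact this
  have huu_t : ∀ i j, Tendsto (fun m => uu m i j) atTop (nhds (s' i j)) := by
    intro i j
    rw [huudef]
    by_cases hD : s' i = sstar i
    · simp only [hD, if_true]
      exact hcoord i j
    · simp only [hD, if_false]
      by_cases hjw : j = wit i
      · simp only [hjw, if_true]
        have := (hbase_t i (wit i)).add (hdd_t i hD)
        rw [add_zero] at this
        exact this
      · simp only [hjw, if_false, add_zero]
        exact hbase_t i j
  have hload_u : ∀ j, Tendsto (fun m => loadT R w (uu m) j) atTop
      (nhds (loadT R w s' j)) := by
    intro j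
    refine tendsto_finset_sum _ fun i hi => ?_
    have hiR : j ∈ R i := (Finset.mem_filter.mp hi).2
    exact ((wT_continuous hwc i j hiR).continuousAt.tendsto).comp (huu_t i j)
  -- eventual strict inequalities on increased resources
  have hev : ∀ᶠ m in atTop, ∀ j ∈ Finset.univ.filter (fun j => ∃ i, sstar i j < s' i j),
      loadT R w (uu m) j < loadT R w (sm (φ m)) j := by
    rw [Filter.eventually_all_finset]
    intro j hj
    obtain ⟨i, hij⟩ := (Finset.mem_filter.mp hj).2
    exact Filter.Tendsto.eventually_lt (hload_u j) (hload j) (hkey i j hij)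
  obtain ⟨m0, hm0⟩ := hev.exists
  -- contradiction with Pareto minimality of sm (φ m0)
  have hallle : ∀ j, loadT R w (uu m0) j ≤ loadT R w (sm (φ m0)) j := by
    intro j
    by_cases hj : ∃ i, sstar i j < s' i j
    · exact (hm0 j (Finset.mem_filter.mpr ⟨Finset.mem_univ _, hj⟩)).le
    · exact hle_non m0 j hj
  have hEq := hsmM (φ m0) (uu m0) (huuP m0) hallle
  have hjw : sstar i0 (wit i0) < s' i0 (wit i0) := hwit i0 hi0
  have hstrict := hm0 (wit i0)
    (Finset.mem_filter.mpr ⟨Finset.mem_univ _, ⟨i0, hjw⟩⟩)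
  exact absurd (hEq (wit i0)) (ne_of_lt hstrict)

end Game

end IDGAux


/-- In every resource selection game with I.D.-dependent
weighting whose cost functions are continuous (and nondecreasing) and whose
weighting functions are continuous (and strictly increasing) on `[0,1]`,
a strong Nash equilibrium exists. -/
theorem exists_strong_nash_id (n k : ℕ) (hn : 0 < n)
    (f : Fin n → ℝ≥0 → ℝ) (R : Fin k → Finset (Fin n))
    (w : Fin k → Fin n → ℝ≥0 → ℝ≥0)
    (hR : ∀ i, (R i).Nonempty)
    (hmono : ∀ j, Monotone (f j)) (hcont : ∀ j, Continuous (f j))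
    (hw : ∀ i : Fin k, ∀ j ∈ R i, StrictMonoOn (w i j) (Set.Iic 1))
    (hwc : ∀ i : Fin k, ∀ j ∈ R i, ContinuousOn (w i j) (Set.Iic 1)) :
    ∃ s : Fin k → Fin n → ℝ≥0, IsStrong n k f R w s := by
  obtain ⟨s, ⟨hP, hN⟩, hS⟩ :=
    IDGAux.main_exists_strong (n := n) (k := k) (f := f) (R := R) (w := w)
      hn hR hmono hcont hw hwc
  exact ⟨s, ⟨hP, hN⟩, hS⟩
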